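/- Quantitative order identification (pointwise strengthening of Lemma 4 used in its inductive proof): Let φ be an STL formula with a classification criterion fixed as in the context. If (ψ, σ) ∈ ⪯⁺(φ), then for every valuation θ ∈ Θ and every signal w, ρ(w, ψ(θ)) ≤ ρ(w, σ(θ)); and if (ψ, σ) ∈ ⪯⁻(φ), then for every valuation θ ∈ Θ and every signal w, ρ(w, σ(θ)) ≤ ρ(w, ψ(θ)). -/

import Mathlib

namespace STLClass

abbrev Signal (N : ℕ) := ℝ → Fin N → ℝ

def shift {N : ℕ} (w : Signal N) (t : ℝ) : Signal N := fun t' => w (t + t')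

inductive STL (N : ℕ) : Type where
  | atom (f : (Fin N → ℝ) → ℝ)
  | falsum
  | not (φ : STL N)
  | and (φ₁ φ₂ : STL N)
  | or (φ₁ φ₂ : STL N)
  | always (a b : ℝ) (φ : STL N)
  | event (a b : ℝ) (φ : STL N)
  | untl (a b : ℝ) (φ₁ φ₂ : STL N)

def STL.top {N : ℕ} : STL N := .not .falsum

noncomputable def robust {N : ℕ} : STL N → Signal N → EReal
  | .atom f, w => ((f (w 0) : ℝ) : EReal)
  | .falsum, _ => ⊥
  | .not φ, w => - robust φ w
  | .and φ₁ φ₂, w => min (robust φ₁ w) (robust φ₂ w)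
  | .or φ₁ φ₂, w => max (robust φ₁ w) (robust φ₂ w)
  | .always a b φ, w => ⨅ t : Set.Icc a b, robust φ (shift w t.1)
  | .event a b φ, w => ⨆ t : Set.Icc a b, robust φ (shift w t.1)
  | .untl a b φ₁ φ₂, w =>
      ⨆ t : Set.Icc a b,
        min (robust φ₂ (shift w t.1)) (⨅ t' : Set.Ico (0 : ℝ) t.1, robust φ₁ (shift w t'.1))

def Sat {N : ℕ} (w : Signal N) (φ : STL N) : Prop := 0 < robust φ w

def Vio {N : ℕ} (w : Signal N) (φ : STL N) : Prop := robust φ w < 0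

/-- An STL formula together with a classification criterion: each temporal operator is
annotated with a natural number `k`, meaning that its interval is split into `k + 1`
consecutive segments (so the "positive integer" of the criterion is `k + 1`). -/
inductive AForm (N : ℕ) : Type where
  | atom (f : (Fin N → ℝ) → ℝ)
  | falsum
  | not (φ : AForm N)
  | and (φ₁ φ₂ : AForm N)
  | or (φ₁ φ₂ : AForm N)
  | always (a b : ℝ) (k : ℕ) (φ : AForm N)
  | event (a b : ℝ) (k : ℕ) (φ : AForm N)
  | untl (a b : ℝ) (k : ℕ) (φ₁ φ₂ : AForm N)

/-- The underlying STL formula of an annotated formula. -/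
def AForm.toSTL {N : ℕ} : AForm N → STL N
  | .atom f => .atom f
  | .falsum => .falsum
  | .not φ => .not φ.toSTL
  | .and φ₁ φ₂ => .and φ₁.toSTL φ₂.toSTL
  | .or φ₁ φ₂ => .or φ₁.toSTL φ₂.toSTL
  | .always a b _ φ => .always a b φ.toSTL
  | .event a b _ φ => .event a b φ.toSTL
  | .untl a b _ φ₁ φ₂ => .untl a b φ₁.toSTL φ₂.toSTL

/-- Well-formedness: every temporal interval `[a, b]` satisfies `0 ≤ a < b`. -/
def AForm.WF {N : ℕ} : AForm N → Prop
  | .atom _ => True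
  | .falsum => True
  | .not φ => φ.WF
  | .and φ₁ φ₂ => φ₁.WF ∧ φ₂.WF
  | .or φ₁ φ₂ => φ₁.WF ∧ φ₂.WF
  | .always a b _ φ => 0 ≤ a ∧ a < b ∧ φ.WF
  | .event a b _ φ => 0 ≤ a ∧ a < b ∧ φ.WF
  | .untl a b _ φ₁ φ₂ => 0 ≤ a ∧ a < b ∧ φ₁.WF ∧ φ₂.WF

/-- A split of the interval `[a, b]` into `n` consecutive nonsingular segments:
`n + 1` strictly increasing points starting at `a` and ending at `b`.  The segment
`i` is `[pts i.castSucc, pts i.succ]`. -/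
structure Split (a b : ℝ) (n : ℕ) : Type where
  pts : Fin (n + 1) → ℝ
  strictMono : StrictMono pts
  first : pts 0 = a
  last : pts (Fin.last n) = b

/-- The valuation space `Θ` of an annotated formula: a choice of admissible breakpoints
for each temporal subformula. -/
def Val {N : ℕ} : AForm N → Type
  | .atom _ => PUnit
  | .falsum => PUnit
  | .not φ => Val φ
  | .and φ₁ φ₂ => Val φ₁ × Val φ₂
  | .or φ₁ φ₂ => Val φ₁ × Val φ₂
  | .always a b k φ => Split a b (k + 1) × Val φ
  | .event a b k φ => Split a b (k + 1) × Val φ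
  | .untl a b k φ₁ φ₂ => Split a b (k + 1) × Val φ₁ × Val φ₂

/-- Finite conjunction of a list of STL formulas (empty conjunction is `⊤`). -/
def listAnd {N : ℕ} : List (STL N) → STL N
  | [] => STL.top
  | [φ] => φ
  | φ :: φ' :: rest => .and φ (listAnd (φ' :: rest))

/-- Finite disjunction of a list of STL formulas (empty disjunction is `⊥`). -/
def listOr {N : ℕ} : List (STL N) → STL N
  | [] => .falsum
  | [φ] => φ
  | φ :: φ' :: rest => .or φ (listOr (φ' :: rest))

/-- `⋀_{i} f i`. -/
def iAnd {N : ℕ} {k : ℕ} (f : Fin k → STL N) : STL N := listAnd (List.ofFn f)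

/-- `⋁_{i} f i`. -/
def iOr {N : ℕ} {k : ℕ} (f : Fin k → STL N) : STL N := listOr (List.ofFn f)

/-- `Cls true φ` is the set `Cls⁺(φ)` of satisfaction classes and `Cls false φ` is the
set `Cls⁻(φ)` of violation classes; a class is represented by its instantiation map
`Θ → STL N` sending a valuation `θ` to the STL formula `ψ(θ)`. -/
def Cls {N : ℕ} : Bool → (φ : AForm N) → Set (Val φ → STL N)
  | b, .atom f =>
      {fun _ => if b then STL.falsum else STL.top, fun _ => STL.atom f}
  | _, .falsum => {fun _ => STL.falsum}
  | b, .not φ =>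
      {c | ∃ ψ ∈ Cls (!b) φ, c = fun θ => STL.not (ψ θ)}
  | b, .and φ₁ φ₂ =>
      {c | ∃ ψ₁ ∈ Cls b φ₁, ∃ ψ₂ ∈ Cls b φ₂,
        c = fun θ => STL.and (ψ₁ θ.1) (ψ₂ θ.2)}
  | b, .or φ₁ φ₂ =>
      {c | ∃ ψ₁ ∈ Cls b φ₁, ∃ ψ₂ ∈ Cls b φ₂,
        c = fun θ => STL.or (ψ₁ θ.1) (ψ₂ θ.2)}
  | b, .always _ _ k φ =>
      {c | ∃ ψ : Fin (k + 1) → Val φ → STL N, (∀ i, ψ i ∈ Cls b φ) ∧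
        c = fun θ => iAnd fun i : Fin (k + 1) =>
          STL.always (θ.1.pts i.castSucc) (θ.1.pts i.succ) (ψ i θ.2)}
  | b, .event _ _ k φ =>
      {c | ∃ ψ : Fin (k + 1) → Val φ → STL N, (∀ i, ψ i ∈ Cls b φ) ∧
        c = fun θ => iOr fun i : Fin (k + 1) =>
          STL.event (θ.1.pts i.castSucc) (θ.1.pts i.succ) (ψ i θ.2)}
  | b, .untl _ _ k φ₁ φ₂ =>
      {c | ∃ ψ : Fin (k + 1) → Val φ₁ → STL N, ∃ σ : Fin (k + 1) → Val φ₂ → STL N,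
           ∃ ξ : Fin (k + 1) → Fin (k + 1) → Val φ₁ → STL N,
        (∀ i, ψ i ∈ Cls b φ₁) ∧ (∀ i, σ i ∈ Cls b φ₂) ∧ (∀ i j, ξ i j ∈ Cls b φ₁) ∧
        c = fun θ => iOr fun i : Fin (k + 1) =>
          STL.and
            (STL.untl (θ.1.pts i.castSucc) (θ.1.pts i.succ) (ψ i θ.2.1) (σ i θ.2.2))
            (iAnd fun j : Fin (i : ℕ) =>
              STL.always (θ.1.pts (j.castLE i.isLt.le).castSucc)
                (θ.1.pts (j.castLE i.isLt.le).succ) (ξ i (j.castLE i.isLt.le) θ.2.1))}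

/-- The satisfiable set `S(ψ)` of a class. -/
def SatSet {N : ℕ} (φ : AForm N) (ψ : Val φ → STL N) : Set (Signal N) :=
  {w | ∃ θ : Val φ, Sat w (ψ θ)}

/-- The falsifiable set `V(ψ)` of a class. -/
def VioSet {N : ℕ} (φ : AForm N) (ψ : Val φ → STL N) : Set (Signal N) :=
  {w | ∃ θ : Val φ, Vio w (ψ θ)}


/-- `Pre true φ` is the relation `⪯⁺(φ)` and `Pre false φ` is the relation `⪯⁻(φ)`,
given as sets of pairs of classes. -/
def Pre {N : ℕ} : Bool → (φ : AForm N) → Set ((Val φ → STL N) × (Val φ → STL N))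
  | b, .atom f =>
      { (fun _ => if b then STL.falsum else STL.top, fun _ => STL.atom f),
        (fun _ => STL.atom f, fun _ => STL.atom f),
        (fun _ => if b then STL.falsum else STL.top,
         fun _ => if b then STL.falsum else STL.top) }
  | _, .falsum => {(fun _ => STL.falsum, fun _ => STL.falsum)}
  | b, .not φ =>
      {p | ∃ q ∈ Pre (!b) φ,
        p = (fun θ => STL.not (q.1 θ), fun θ => STL.not (q.2 θ))}
  | b, .and φ₁ φ₂ =>
      {p | ∃ q₁ ∈ Pre b φ₁, ∃ q₂ ∈ Pre b φ₂,
        p = (fun θ => STL.and (q₁.1 θ.1) (q₂.1 θ.2),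
             fun θ => STL.and (q₁.2 θ.1) (q₂.2 θ.2))}
  | b, .or φ₁ φ₂ =>
      {p | ∃ q₁ ∈ Pre b φ₁, ∃ q₂ ∈ Pre b φ₂,
        p = (fun θ => STL.or (q₁.1 θ.1) (q₂.1 θ.2),
             fun θ => STL.or (q₁.2 θ.1) (q₂.2 θ.2))}
  | b, .always _ _ k φ =>
      {p | ∃ ψ σ : Fin (k + 1) → Val φ → STL N, (∀ i, (ψ i, σ i) ∈ Pre b φ) ∧
        p = (fun θ => iAnd fun i : Fin (k + 1) =>
               STL.always (θ.1.pts i.castSucc) (θ.1.pts i.succ) (ψ i θ.2),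
             fun θ => iAnd fun i : Fin (k + 1) =>
               STL.always (θ.1.pts i.castSucc) (θ.1.pts i.succ) (σ i θ.2))}
  | b, .event _ _ k φ =>
      {p | ∃ ψ σ : Fin (k + 1) → Val φ → STL N, (∀ i, (ψ i, σ i) ∈ Pre b φ) ∧
        p = (fun θ => iOr fun i : Fin (k + 1) =>
               STL.event (θ.1.pts i.castSucc) (θ.1.pts i.succ) (ψ i θ.2),
             fun θ => iOr fun i : Fin (k + 1) =>
               STL.event (θ.1.pts i.castSucc) (θ.1.pts i.succ) (σ i θ.2))}
  | b, .untl _ _ k φ₁ φ₂ =>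
      {p | ∃ ψ ψ' : Fin (k + 1) → Val φ₁ → STL N,
           ∃ σ σ' : Fin (k + 1) → Val φ₂ → STL N,
           ∃ ξ ξ' : Fin (k + 1) → Fin (k + 1) → Val φ₁ → STL N,
        (∀ i, (ψ i, ψ' i) ∈ Pre b φ₁) ∧ (∀ i, (σ i, σ' i) ∈ Pre b φ₂) ∧
        (∀ i j, (ξ i j, ξ' i j) ∈ Pre b φ₁) ∧
        p = (fun θ => iOr fun i : Fin (k + 1) =>
               STL.and
                 (STL.untl (θ.1.pts i.castSucc) (θ.1.pts i.succ) (ψ i θ.2.1) (σ i θ.2.2))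
                 (iAnd fun j : Fin (i : ℕ) =>
                   STL.always (θ.1.pts (j.castLE i.isLt.le).castSucc)
                     (θ.1.pts (j.castLE i.isLt.le).succ) (ξ i (j.castLE i.isLt.le) θ.2.1)),
             fun θ => iOr fun i : Fin (k + 1) =>
               STL.and
                 (STL.untl (θ.1.pts i.castSucc) (θ.1.pts i.succ) (ψ' i θ.2.1) (σ' i θ.2.2))
                 (iAnd fun j : Fin (i : ℕ) =>
                   STL.always (θ.1.pts (j.castLE i.isLt.le).castSucc)
                     (θ.1.pts (j.castLE i.isLt.le).succ) (ξ' i (j.castLE i.isLt.le) θ.2.1)))}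


private lemma forall₂_ofFn {α β : Type*} {R : α → β → Prop} :
    ∀ {k : ℕ} {f : Fin k → α} {g : Fin k → β},
      (∀ i, R (f i) (g i)) → List.Forall₂ R (List.ofFn f) (List.ofFn g)
  | 0, _, _, _ => by simp
  | k + 1, f, g, h => by
    rw [List.ofFn_succ, List.ofFn_succ]
    exact List.Forall₂.cons (h 0) (forall₂_ofFn fun i => h i.succ)

private lemma listAnd_mono {N : ℕ} {w : Signal N} {l₁ l₂ : List (STL N)}
    (h : List.Forall₂ (fun a b => robust a w ≤ robust b w) l₁ l₂) :
    robust (listAnd l₁) w ≤ robust (listAnd l₂) w := by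
  induction h with
  | nil => exact le_refl _
  | cons hab htl ih =>
    cases htl with
    | nil => simpa [listAnd] using hab
    | cons h2 h3 =>
      simp only [listAnd, robust]
      exact min_le_min hab ih

private lemma listOr_mono {N : ℕ} {w : Signal N} {l₁ l₂ : List (STL N)}
    (h : List.Forall₂ (fun a b => robust a w ≤ robust b w) l₁ l₂) :
    robust (listOr l₁) w ≤ robust (listOr l₂) w := by
  induction h with
  | nil => exact le_refl _
  | cons hab htl ih =>
    cases htl with
    | nil => simpa [listOr] using hab
    | cons h2 h3 =>
      simp only [listOr, robust]
      exact max_le_max hab ih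

private lemma iAnd_mono {N : ℕ} {w : Signal N} {k : ℕ} {f g : Fin k → STL N}
    (h : ∀ i, robust (f i) w ≤ robust (g i) w) :
    robust (iAnd f) w ≤ robust (iAnd g) w :=
  listAnd_mono (forall₂_ofFn h)

private lemma iOr_mono {N : ℕ} {w : Signal N} {k : ℕ} {f g : Fin k → STL N}
    (h : ∀ i, robust (f i) w ≤ robust (g i) w) :
    robust (iOr f) w ≤ robust (iOr g) w :=
  listOr_mono (forall₂_ofFn h)

/-- Quantitative order identification: if `(ψ, σ) ∈ ⪯⁺(φ)` then
`ρ(w, ψ(θ)) ≤ ρ(w, σ(θ))` for every `θ ∈ Θ` and every signal `w`; and if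
`(ψ, σ) ∈ ⪯⁻(φ)` then `ρ(w, σ(θ)) ≤ ρ(w, ψ(θ))` for every `θ ∈ Θ` and
every signal `w`. -/
theorem pre_quantitative {N : ℕ} (φ : AForm N) (hφ : φ.WF) :
    (∀ ψ σ : Val φ → STL N, (ψ, σ) ∈ Pre true φ →
      ∀ (θ : Val φ) (w : Signal N), robust (ψ θ) w ≤ robust (σ θ) w) ∧
    (∀ ψ σ : Val φ → STL N, (ψ, σ) ∈ Pre false φ →
      ∀ (θ : Val φ) (w : Signal N), robust (σ θ) w ≤ robust (ψ θ) w) := by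
  induction φ with
  | atom f =>
    constructor <;>
    · intro ψ σ h θ w
      simp only [Pre, Set.mem_insert_iff, Set.mem_singleton_iff, Prod.mk.injEq,
        if_true, if_false] at h
      rcases h with ⟨h1, h2⟩ | ⟨h1, h2⟩ | ⟨h1, h2⟩ <;> subst h1 <;> subst h2 <;>
        simp [robust, STL.top]
  | falsum =>
    constructor <;>
    · intro ψ σ h θ w
      simp only [Pre, Set.mem_singleton_iff, Prod.mk.injEq] at h
      rcases h with ⟨h1, h2⟩
      subst h1; subst h2
      exact le_refl _
  | not φ ih =>
    obtain ⟨ih₁, ih₂⟩ := ih hφ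
    constructor <;>
    · intro ψ σ h θ w
      simp only [Pre, Set.mem_setOf_eq, Prod.mk.injEq] at h
      obtain ⟨q, hq, h1, h2⟩ := h
      simp only [robust, EReal.neg_le_neg_iff]
      first
      | exact ih₂ q.1 q.2 hq θ w
      | exact ih₁ q.1 q.2 hq θ w
  | and φ₁ φ₂ ih₁ ih₂ =>
    obtain ⟨ih₁t, ih₁f⟩ := ih₁ hφ.1
    obtain ⟨ih₂t, ih₂f⟩ := ih₂ hφ.2
    constructor <;>
    · intro ψ σ h θ w
      simp only [Pre, Set.mem_setOf_eq, Prod.mk.injEq] at h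
      obtain ⟨q₁, hq₁, q₂, hq₂, h1, h2⟩ := h
      subst h1; subst h2
      simp only [robust]
      first
      | exact min_le_min (ih₁t _ _ hq₁ θ.1 w) (ih₂t _ _ hq₂ θ.2 w)
      | exact min_le_min (ih₁f _ _ hq₁ θ.1 w) (ih₂f _ _ hq₂ θ.2 w)
  | or φ₁ φ₂ ih₁ ih₂ =>
    obtain ⟨ih₁t, ih₁f⟩ := ih₁ hφ.1
    obtain ⟨ih₂t, ih₂f⟩ := ih₂ hφ.2
    constructor <;>
    · intro ψ σ h θ w
      simp only [Pre, Set.mem_setOf_eq, Prod.mk.injEq] at h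
      obtain ⟨q₁, hq₁, q₂, hq₂, h1, h2⟩ := h
      subst h1; subst h2
      simp only [robust]
      first
      | exact max_le_max (ih₁t _ _ hq₁ θ.1 w) (ih₂t _ _ hq₂ θ.2 w)
      | exact max_le_max (ih₁f _ _ hq₁ θ.1 w) (ih₂f _ _ hq₂ θ.2 w)
  | always a b k φ ih =>
    obtain ⟨iht, ihf⟩ := ih hφ.2.2
    constructor <;>
    · intro ψ σ h θ w
      simp only [Pre, Set.mem_setOf_eq, Prod.mk.injEq] at h
      obtain ⟨ψ', σ', hps, h1, h2⟩ := h
      subst h1; subst h2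
      refine iAnd_mono fun i => ?_
      simp only [robust]
      refine iInf_mono fun t => ?_
      first
      | exact iht _ _ (hps i) θ.2 _
      | exact ihf _ _ (hps i) θ.2 _
  | event a b k φ ih =>
    obtain ⟨iht, ihf⟩ := ih hφ.2.2
    constructor <;>
    · intro ψ σ h θ w
      simp only [Pre, Set.mem_setOf_eq, Prod.mk.injEq] at h
      obtain ⟨ψ', σ', hps, h1, h2⟩ := h
      subst h1; subst h2
      refine iOr_mono fun i => ?_
      simp only [robust]
      refine iSup_mono fun t => ?_
      first
      | exact iht _ _ (hps i) θ.2 _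
      | exact ihf _ _ (hps i) θ.2 _
  | untl a b k φ₁ φ₂ ih₁ ih₂ =>
    obtain ⟨ih₁t, ih₁f⟩ := ih₁ hφ.2.2.1
    obtain ⟨ih₂t, ih₂f⟩ := ih₂ hφ.2.2.2
    constructor <;>
    · intro ψ σ h θ w
      simp only [Pre, Set.mem_setOf_eq, Prod.mk.injEq] at h
      obtain ⟨ψ', ψ'', σ', σ'', ξ', ξ'', hψ, hσ, hξ, h1, h2⟩ := h
      subst h1; subst h2
      refine iOr_mono fun i => ?_
      simp only [robust]
      refine min_le_min ?_ ?_
      · refine iSup_mono fun t => ?_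
        refine min_le_min ?_ (iInf_mono fun t' => ?_)
        · first
          | exact ih₂t _ _ (hσ i) θ.2.2 _
          | exact ih₂f _ _ (hσ i) θ.2.2 _
        · first
          | exact ih₁t _ _ (hψ i) θ.2.1 _
          | exact ih₁f _ _ (hψ i) θ.2.1 _
      · refine iAnd_mono fun j => ?_
        simp only [robust]
        refine iInf_mono fun t => ?_
        first
        | exact ih₁t _ _ (hξ i _) θ.2.1 _
        | exact ih₁f _ _ (hξ i _) θ.2.1 _

end STLClass
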